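/- Fix T > 0, σ ∈ ℝ, R ∈ (0,1], and let α(t) = λ e^{-ρ t} + (1-λ) e^{-γ t} with γ > ρ > 0 and λ ∈ (0,1). If Γ₁, Γ₂ : [0,T] → ℝ are two continuously differentiable functions each satisfying the Volterra differential-integral equation Γ'(t) + σ² Γ(t) - ((1-R)/R) Γ(t)² + ∫_t^T exp(∫_t^s (σ² - 2((1-R)/R) Γ(r)) dr) · α'(s-t) · ((1-R)/R) Γ(s)² ds + exp(∫_t^T (σ² - 2((1-R)/R) Γ(r)) dr) · α'(T-t) = 0 for all t ∈ [0,T] with Γ(T) = 1, then Γ₁ = Γ₂ on [0,T]. -/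

import Mathlib

open Real Set

/-- `Γ` (with derivative `Γ'` on `[0,T]`) is a continuously differentiable solution
of the Volterra differential-integral equation
`Γ'(t) + σ² Γ(t) - ((1-R)/R) Γ(t)²
  + ∫_t^T exp(∫_t^s (σ² - 2((1-R)/R) Γ(r)) dr) α'(s-t) ((1-R)/R) Γ(s)² ds
  + exp(∫_t^T (σ² - 2((1-R)/R) Γ(r)) dr) α'(T-t) = 0`, `Γ(T) = 1`. -/
def IsVDIESolution (T σ R : ℝ) (α Γ Γ' : ℝ → ℝ) : Prop :=
  ContinuousOn Γ' (Set.Icc 0 T) ∧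
  (∀ t ∈ Set.Icc (0 : ℝ) T, HasDerivWithinAt Γ (Γ' t) (Set.Icc (0 : ℝ) T) t) ∧
  (∀ t ∈ Set.Icc (0 : ℝ) T,
    Γ' t + σ ^ 2 * Γ t - ((1 - R) / R) * (Γ t) ^ 2
      + (∫ s in t..T,
          Real.exp (∫ r in t..s, (σ ^ 2 - 2 * ((1 - R) / R) * Γ r))
            * deriv α (s - t) * (((1 - R) / R) * (Γ s) ^ 2))
      + Real.exp (∫ r in t..T, (σ ^ 2 - 2 * ((1 - R) / R) * Γ r))
          * deriv α (T - t) = 0) ∧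
  Γ T = 1

set_option maxHeartbeats 1000000

namespace VDIEproof

noncomputable def cl (T : ℝ) (Γ : ℝ → ℝ) : ℝ → ℝ := fun t => Γ (max 0 (min t T))
noncomputable def q (T σ c : ℝ) (Γ : ℝ → ℝ) : ℝ → ℝ := fun r => σ ^ 2 - 2 * c * cl T Γ r
noncomputable def A (T σ c : ℝ) (Γ : ℝ → ℝ) : ℝ → ℝ := fun t => ∫ r in (0:ℝ)..t, q T σ c Γ r
noncomputable def II (T σ c κ : ℝ) (Γ : ℝ → ℝ) : ℝ → ℝ := fun t => Real.exp (κ * t - A T σ c Γ t) *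
    ∫ s in t..T, Real.exp (A T σ c Γ s) * Real.exp (-(κ * s)) * (c * (cl T Γ s) ^ 2)
noncomputable def EE (T σ c κ : ℝ) (Γ : ℝ → ℝ) : ℝ → ℝ := fun t =>
  Real.exp ((A T σ c Γ T - A T σ c Γ t) - κ * (T - t))

lemma cl_eq {T : ℝ} {Γ : ℝ → ℝ} (hT : 0 ≤ T) {t : ℝ} (ht : t ∈ Icc 0 T) : cl T Γ t = Γ t := by
  simp [cl, min_eq_left ht.2, max_eq_right ht.1]

lemma cl_continuous {T : ℝ} {Γ : ℝ → ℝ} (hT : 0 ≤ T) (hΓ : ContinuousOn Γ (Icc 0 T)) :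
    Continuous (cl T Γ) := by
  apply hΓ.comp_continuous
  · exact continuous_const.max (continuous_id.min continuous_const)
  · intro t; exact ⟨le_max_left _ _, max_le hT (min_le_right _ _)⟩

lemma q_continuous (σ c : ℝ) {T : ℝ} {Γ : ℝ → ℝ} (hT : 0 ≤ T) (hΓ : ContinuousOn Γ (Icc 0 T)) :
    Continuous (q T σ c Γ) :=
  continuous_const.sub (continuous_const.mul (cl_continuous hT hΓ))

lemma A_continuous (σ c : ℝ) {T : ℝ} {Γ : ℝ → ℝ} (hT : 0 ≤ T) (hΓ : ContinuousOn Γ (Icc 0 T)) :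
    Continuous (A T σ c Γ) :=
  continuous_iff_continuousAt.mpr fun s =>
    (((q_continuous σ c hT hΓ).integral_hasStrictDerivAt 0 s).hasDerivAt).continuousAt

lemma A_hasDerivAt (σ c : ℝ) {T : ℝ} {Γ : ℝ → ℝ} (hT : 0 ≤ T)
    (hΓ : ContinuousOn Γ (Icc 0 T)) (t : ℝ) :
    HasDerivAt (A T σ c Γ) (q T σ c Γ t) t :=
  ((q_continuous σ c hT hΓ).integral_hasStrictDerivAt 0 t).hasDerivAt

lemma deriv_alpha (ρ γ l : ℝ) (α : ℝ → ℝ)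
    (hα : α = fun t : ℝ => l * Real.exp (-ρ * t) + (1 - l) * Real.exp (-γ * t)) (u : ℝ) :
    deriv α u = l * -ρ * Real.exp (-ρ * u) + (1 - l) * -γ * Real.exp (-γ * u) := by
  subst hα
  have h1 : HasDerivAt (fun t : ℝ => l * Real.exp (-ρ * t) + (1 - l) * Real.exp (-γ * t))
      (l * (Real.exp (-ρ * u) * (-ρ * 1)) + (1 - l) * (Real.exp (-γ * u) * (-γ * 1))) u :=
    ((((hasDerivAt_id u).const_mul (-ρ)).exp).const_mul l).add
      ((((hasDerivAt_id u).const_mul (-γ)).exp).const_mul (1 - l))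
  rw [h1.deriv]; ring

lemma gamma_deriv_eq (T σ c ρ γ l : ℝ) (hT : 0 < T) (Γ Γ' : ℝ → ℝ) (α : ℝ → ℝ)
    (hα : α = fun t : ℝ => l * Real.exp (-ρ * t) + (1 - l) * Real.exp (-γ * t))
    (hΓ : ContinuousOn Γ (Icc 0 T))
    (heq : ∀ t ∈ Icc (0:ℝ) T,
      Γ' t + σ ^ 2 * Γ t - c * (Γ t) ^ 2
        + (∫ s in t..T, Real.exp (∫ r in t..s, (σ ^ 2 - 2 * c * Γ r))
            * deriv α (s - t) * (c * (Γ s) ^ 2))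
        + Real.exp (∫ r in t..T, (σ ^ 2 - 2 * c * Γ r)) * deriv α (T - t) = 0)
    {t : ℝ} (ht : t ∈ Icc (0:ℝ) T) :
    Γ' t = -(σ ^ 2) * cl T Γ t + c * (cl T Γ t) ^ 2
      + l * ρ * II T σ c ρ Γ t + (1 - l) * γ * II T σ c γ Γ t
      + l * ρ * EE T σ c ρ Γ t + (1 - l) * γ * EE T σ c γ Γ t := by
  have hTle : (0:ℝ) ≤ T := hT.le
  have hq := q_continuous σ c hTle hΓ
  have hA := A_continuous σ c hTle hΓ
  have hcl := cl_continuous hTle hΓ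
  have hqint : ∀ a b : ℝ, IntervalIntegrable (q T σ c Γ) MeasureTheory.volume a b :=
    fun a b => hq.intervalIntegrable a b
  have hiq : ∀ s ∈ Icc (0:ℝ) T,
      (∫ r in t..s, (σ ^ 2 - 2 * c * Γ r)) = A T σ c Γ s - A T σ c Γ t := by
    intro s hs
    have hsub : uIcc t s ⊆ Icc 0 T := uIcc_subset_Icc ht hs
    rw [intervalIntegral.integral_congr (g := q T σ c Γ)
      (fun r hr => by simp [q, cl_eq hTle (hsub hr)])]
    simp only [A]
    rw [intervalIntegral.integral_interval_sub_left (hqint 0 s) (hqint 0 t)]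
  have hsubT : uIcc t T ⊆ Icc 0 T := uIcc_subset_Icc ht ⟨hTle, le_rfl⟩
  have kk : ∀ κ s : ℝ, Real.exp (A T σ c Γ s - A T σ c Γ t) * Real.exp (-κ * (s - t))
      = Real.exp (κ * t - A T σ c Γ t) * (Real.exp (A T σ c Γ s) * Real.exp (-(κ * s))) := by
    intro κ s
    rw [← Real.exp_add, ← Real.exp_add, ← Real.exp_add]
    congr 1; ring
  -- integrability of the pieces
  have hcont1 : ∀ κ : ℝ, Continuous (fun s =>
      Real.exp (A T σ c Γ s) * Real.exp (-(κ * s)) * (c * (cl T Γ s) ^ 2)) := fun κ =>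
    (hA.rexp.mul ((continuous_const.mul continuous_id).neg.rexp)).mul
      (continuous_const.mul (hcl.pow 2))
  have hint : (∫ s in t..T, Real.exp (∫ r in t..s, (σ ^ 2 - 2 * c * Γ r))
        * deriv α (s - t) * (c * (Γ s) ^ 2))
      = -(l * ρ * II T σ c ρ Γ t) - (1 - l) * γ * II T σ c γ Γ t := by
    rw [intervalIntegral.integral_congr (g := fun s =>
        (-(l * ρ) * Real.exp (ρ * t - A T σ c Γ t))
          * (Real.exp (A T σ c Γ s) * Real.exp (-(ρ * s)) * (c * (cl T Γ s) ^ 2))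
        + (-((1 - l) * γ) * Real.exp (γ * t - A T σ c Γ t))
          * (Real.exp (A T σ c Γ s) * Real.exp (-(γ * s)) * (c * (cl T Γ s) ^ 2)))
      ?_]
    · rw [intervalIntegral.integral_add
        (f := fun s => (-(l * ρ) * Real.exp (ρ * t - A T σ c Γ t))
            * (Real.exp (A T σ c Γ s) * Real.exp (-(ρ * s)) * (c * (cl T Γ s) ^ 2)))
        (g := fun s => (-((1 - l) * γ) * Real.exp (γ * t - A T σ c Γ t))
            * (Real.exp (A T σ c Γ s) * Real.exp (-(γ * s)) * (c * (cl T Γ s) ^ 2)))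
        ((continuous_const.mul (hcont1 ρ)).intervalIntegrable t T)
        ((continuous_const.mul (hcont1 γ)).intervalIntegrable t T),
        intervalIntegral.integral_const_mul, intervalIntegral.integral_const_mul]
      simp only [II]
      ring
    · intro s hs
      have hs' : s ∈ Icc 0 T := hsubT hs
      dsimp only
      rw [hiq s hs', deriv_alpha ρ γ l α hα,
        show Γ s = cl T Γ s from (cl_eq hTle hs').symm]
      calc Real.exp (A T σ c Γ s - A T σ c Γ t)
            * (l * -ρ * Real.exp (-ρ * (s - t)) + (1 - l) * -γ * Real.exp (-γ * (s - t)))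
            * (c * cl T Γ s ^ 2)
          = -(l * ρ) * (Real.exp (A T σ c Γ s - A T σ c Γ t) * Real.exp (-ρ * (s - t))
              * (c * cl T Γ s ^ 2))
            + -((1 - l) * γ) * (Real.exp (A T σ c Γ s - A T σ c Γ t) * Real.exp (-γ * (s - t))
              * (c * cl T Γ s ^ 2)) := by ring
        _ = _ := by rw [kk ρ s, kk γ s]; ring
  have hexp : Real.exp (∫ r in t..T, (σ ^ 2 - 2 * c * Γ r)) * deriv α (T - t)
      = -(l * ρ * EE T σ c ρ Γ t) - (1 - l) * γ * EE T σ c γ Γ t := by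
    rw [hiq T ⟨hTle, le_rfl⟩, deriv_alpha ρ γ l α hα]
    simp only [EE]
    have k2 : ∀ κ : ℝ, Real.exp ((A T σ c Γ T - A T σ c Γ t) - κ * (T - t))
        = Real.exp (A T σ c Γ T - A T σ c Γ t) * Real.exp (-κ * (T - t)) := by
      intro κ; rw [← Real.exp_add]; congr 1; ring
    rw [k2 ρ, k2 γ]; ring
  have h0 := heq t ht
  rw [hint, hexp] at h0
  rw [cl_eq hTle ht]
  linarith [h0]

def vv (σ c ρ γ l : ℝ) : ℝ × ℝ × ℝ × ℝ × ℝ → ℝ × ℝ × ℝ × ℝ × ℝ := fun x =>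
  (-(σ ^ 2) * x.1 + c * x.1 ^ 2 + l * ρ * x.2.1 + (1 - l) * γ * x.2.2.1
     + l * ρ * x.2.2.2.1 + (1 - l) * γ * x.2.2.2.2,
   (ρ - σ ^ 2 + 2 * c * x.1) * x.2.1 - c * x.1 ^ 2,
   (γ - σ ^ 2 + 2 * c * x.1) * x.2.2.1 - c * x.1 ^ 2,
   (ρ - σ ^ 2 + 2 * c * x.1) * x.2.2.2.1,
   (γ - σ ^ 2 + 2 * c * x.1) * x.2.2.2.2)

lemma mul_diff_bound {k D u v : ℝ} (hk : 0 ≤ k) (h : |u - v| ≤ D) : |k * u - k * v| ≤ k * D := by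
  rw [show k * u - k * v = k * (u - v) by ring, abs_mul, abs_of_nonneg hk]
  exact mul_le_mul_of_nonneg_left h hk

lemma prod_diff_bound {M D a b a' b' : ℝ} (ha : |a| ≤ M) (hb' : |b'| ≤ M)
    (h1 : |a - a'| ≤ D) (h2 : |b - b'| ≤ D) : |a * b - a' * b'| ≤ 2 * M * D := by
  have hM : 0 ≤ M := (abs_nonneg a).trans ha
  calc |a * b - a' * b'| = |a * (b - b') + b' * (a - a')| := by ring_nf
    _ ≤ |a * (b - b')| + |b' * (a - a')| := abs_add_le _ _
    _ = |a| * |b - b'| + |b'| * |a - a'| := by rw [abs_mul, abs_mul]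
    _ ≤ M * D + M * D := add_le_add
        (mul_le_mul ha h2 (abs_nonneg _) hM) (mul_le_mul hb' h1 (abs_nonneg _) hM)
    _ = 2 * M * D := by ring

lemma vv_lipschitz (σ c ρ γ l M : ℝ) (hc : 0 ≤ c) (hρ : 0 < ρ) (hργ : ρ < γ)
    (hl0 : 0 < l) (hl1 : l < 1) :
    LipschitzOnWith (3 * σ ^ 2 + 3 * ρ + 3 * γ + 6 * c * M).toNNReal (vv σ c ρ γ l)
      (Metric.closedBall 0 M) := by
  have hγ : 0 < γ := hρ.trans hργ
  rw [lipschitzOnWith_iff_dist_le_mul]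
  intro x hx y hy
  set D := dist x y with hD'
  have hD : 0 ≤ D := dist_nonneg
  have hKr : ((3 * σ ^ 2 + 3 * ρ + 3 * γ + 6 * c * M).toNNReal : ℝ) * D
      ≥ (3 * σ ^ 2 + 3 * ρ + 3 * γ + 6 * c * M) * D := by
    apply mul_le_mul_of_nonneg_right _ hD
    exact Real.le_coe_toNNReal _
  -- componentwise distance bounds
  have hd1 : |x.1 - y.1| ≤ D := by
    rw [← Real.dist_eq]; rw [hD', Prod.dist_eq]; exact le_max_left _ _
  have hd2' : dist x.2 y.2 ≤ D := by rw [hD', Prod.dist_eq]; exact le_max_right _ _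
  have hd2 : |x.2.1 - y.2.1| ≤ D := by
    rw [← Real.dist_eq]; exact le_trans (by rw [Prod.dist_eq]; exact le_max_left _ _) hd2'
  have hd3' : dist x.2.2 y.2.2 ≤ D :=
    le_trans (by rw [Prod.dist_eq]; exact le_max_right _ _) hd2'
  have hd3 : |x.2.2.1 - y.2.2.1| ≤ D := by
    rw [← Real.dist_eq]; exact le_trans (by rw [Prod.dist_eq]; exact le_max_left _ _) hd3'
  have hd4' : dist x.2.2.2 y.2.2.2 ≤ D :=
    le_trans (by rw [Prod.dist_eq]; exact le_max_right _ _) hd3'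
  have hd4 : |x.2.2.2.1 - y.2.2.2.1| ≤ D := by
    rw [← Real.dist_eq]; exact le_trans (by rw [Prod.dist_eq]; exact le_max_left _ _) hd4'
  have hd5 : |x.2.2.2.2 - y.2.2.2.2| ≤ D := by
    rw [← Real.dist_eq]; exact le_trans (by rw [Prod.dist_eq]; exact le_max_right _ _) hd4'
  -- norm bounds
  have hxM : ‖x‖ ≤ M := by rwa [← mem_closedBall_zero_iff]
  have hyM : ‖y‖ ≤ M := by rwa [← mem_closedBall_zero_iff]
  have ha1 : |x.1| ≤ M := by
    have h := norm_fst_le x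
    rw [Real.norm_eq_abs] at h; exact h.trans hxM
  have hb1 : |y.1| ≤ M := by
    have h := norm_fst_le y
    rw [Real.norm_eq_abs] at h; exact h.trans hyM
  have ha2 : |x.2.1| ≤ M := by
    have h := le_trans (norm_fst_le x.2) (norm_snd_le x)
    rw [Real.norm_eq_abs] at h; exact h.trans hxM
  have hb2 : |y.2.1| ≤ M := by
    have h := le_trans (norm_fst_le y.2) (norm_snd_le y)
    rw [Real.norm_eq_abs] at h; exact h.trans hyM
  have hb3 : |y.2.2.1| ≤ M := by
    have h := le_trans (le_trans (norm_fst_le y.2.2) (norm_snd_le y.2)) (norm_snd_le y)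
    rw [Real.norm_eq_abs] at h; exact h.trans hyM
  have hb4 : |y.2.2.2.1| ≤ M := by
    have h := le_trans (le_trans (le_trans (norm_fst_le y.2.2.2) (norm_snd_le y.2.2))
      (norm_snd_le y.2)) (norm_snd_le y)
    rw [Real.norm_eq_abs] at h; exact h.trans hyM
  have hb5 : |y.2.2.2.2| ≤ M := by
    have h := le_trans (le_trans (le_trans (norm_snd_le y.2.2.2) (norm_snd_le y.2.2))
      (norm_snd_le y.2)) (norm_snd_le y)
    rw [Real.norm_eq_abs] at h; exact h.trans hyM
  -- product bounds
  have P1 := prod_diff_bound ha1 hb1 hd1 hd1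
  have P2 := prod_diff_bound ha1 hb2 hd1 hd2
  have P3 := prod_diff_bound ha1 hb3 hd1 hd3
  have P4 := prod_diff_bound ha1 hb4 hd1 hd4
  have P5 := prod_diff_bound ha1 hb5 hd1 hd5
  have hMn : 0 ≤ M := (abs_nonneg _).trans ha1
  -- scaled bounds (two sided after abs_le)
  have C1 := abs_le.mp (mul_diff_bound hc P1)
  have C2 := abs_le.mp (mul_diff_bound hc P2)
  have C3 := abs_le.mp (mul_diff_bound hc P3)
  have C4 := abs_le.mp (mul_diff_bound hc P4)
  have C5 := abs_le.mp (mul_diff_bound hc P5)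
  have S1 := abs_le.mp (mul_diff_bound (sq_nonneg σ) hd1)
  have S2 := abs_le.mp (mul_diff_bound (sq_nonneg σ) hd2)
  have S3 := abs_le.mp (mul_diff_bound (sq_nonneg σ) hd3)
  have S4 := abs_le.mp (mul_diff_bound (sq_nonneg σ) hd4)
  have S5 := abs_le.mp (mul_diff_bound (sq_nonneg σ) hd5)
  have R2 := abs_le.mp (mul_diff_bound hρ.le hd2)
  have R4 := abs_le.mp (mul_diff_bound hρ.le hd4)
  have G3 := abs_le.mp (mul_diff_bound hγ.le hd3)
  have G5 := abs_le.mp (mul_diff_bound hγ.le hd5)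
  have L2 := abs_le.mp (mul_diff_bound (by positivity : (0:ℝ) ≤ l * ρ) hd2)
  have L4 := abs_le.mp (mul_diff_bound (by positivity : (0:ℝ) ≤ l * ρ) hd4)
  have L3 := abs_le.mp (mul_diff_bound
    (mul_nonneg (by linarith : (0:ℝ) ≤ 1 - l) hγ.le) hd3)
  have L5 := abs_le.mp (mul_diff_bound
    (mul_nonneg (by linarith : (0:ℝ) ≤ 1 - l) hγ.le) hd5)
  -- nonneg slack terms
  have N1 : 0 ≤ σ ^ 2 * D := by positivity
  have N2 : 0 ≤ ρ * D := by positivity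
  have N3 : 0 ≤ γ * D := by positivity
  have N4 : 0 ≤ c * M * D := by positivity
  have N5 : 0 ≤ (1 - l) * (ρ * D) := by
    apply mul_nonneg (by linarith) (by positivity)
  have N6 : 0 ≤ l * (γ * D) := by positivity
  refine le_trans ?_ hKr
  dsimp only [vv]
  rw [Prod.dist_eq, Prod.dist_eq, Prod.dist_eq, Prod.dist_eq]
  dsimp only
  rw [Real.dist_eq, Real.dist_eq, Real.dist_eq, Real.dist_eq, Real.dist_eq]
  refine max_le ?_ (max_le ?_ (max_le ?_ (max_le ?_ ?_))) <;> rw [abs_le] <;>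
    refine ⟨?_, ?_⟩ <;>
    linarith only [hD, N1, N2, N3, N4, N5, N6, C1.1, C1.2, C2.1, C2.2, C3.1, C3.2, C4.1, C4.2, C5.1, C5.2,
      S1.1, S1.2, S2.1, S2.2, S3.1, S3.2, S4.1, S4.2, S5.1, S5.2,
      R2.1, R2.2, R4.1, R4.2, G3.1, G3.2, G5.1, G5.2,
      L2.1, L2.2, L3.1, L3.2, L4.1, L4.2, L5.1, L5.2]


noncomputable def uu (T σ c ρ γ : ℝ) (Γ : ℝ → ℝ) : ℝ → ℝ × ℝ × ℝ × ℝ × ℝ := fun t =>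
  (cl T Γ t, II T σ c ρ Γ t, II T σ c γ Γ t, EE T σ c ρ Γ t, EE T σ c γ Γ t)

lemma II_hasDerivAt (σ c κ : ℝ) {T : ℝ} {Γ : ℝ → ℝ} (hT : 0 ≤ T)
    (hΓ : ContinuousOn Γ (Icc 0 T)) (t : ℝ) :
    HasDerivAt (II T σ c κ Γ)
      ((κ - q T σ c Γ t) * II T σ c κ Γ t - c * (cl T Γ t) ^ 2) t := by
  set g : ℝ → ℝ := fun s => Real.exp (A T σ c Γ s) * Real.exp (-(κ * s)) * (c * (cl T Γ s) ^ 2)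
    with hg
  have hgc : Continuous g :=
    (((A_continuous σ c hT hΓ).rexp.mul
      ((continuous_const.mul continuous_id).neg.rexp)).mul
      (continuous_const.mul ((cl_continuous hT hΓ).pow 2)))
  have h1 : HasDerivAt (fun t => ∫ s in t..T, g s) (-(g t)) t := by
    have := ((hgc.integral_hasStrictDerivAt T t).hasDerivAt).neg
    apply this.congr_of_eventuallyEq
    filter_upwards with x
    rw [intervalIntegral.integral_symm]
    rfl
  have h2 : HasDerivAt (fun t => Real.exp (κ * t - A T σ c Γ t))
      ((κ - q T σ c Γ t) * Real.exp (κ * t - A T σ c Γ t)) t := by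
    have := (((hasDerivAt_id t).const_mul κ).sub (A_hasDerivAt σ c hT hΓ t)).exp
    simpa [mul_comm] using this
  have h3 : HasDerivAt (II T σ c κ Γ) ((κ - q T σ c Γ t) * Real.exp (κ * t - A T σ c Γ t)
      * (∫ s in t..T, g s) + Real.exp (κ * t - A T σ c Γ t) * -(g t)) t := h2.mul h1
  have hkey : Real.exp (κ * t - A T σ c Γ t) * g t = c * (cl T Γ t) ^ 2 := by
    simp only [hg]
    rw [← mul_assoc, ← Real.exp_add, ← Real.exp_add,
      show κ * t - A T σ c Γ t + (A T σ c Γ t + -(κ * t)) = 0 by ring, Real.exp_zero, one_mul]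
  convert h3 using 1
  rw [mul_neg, hkey]
  unfold II
  ring

lemma II_continuous (σ c κ : ℝ) {T : ℝ} {Γ : ℝ → ℝ} (hT : 0 ≤ T)
    (hΓ : ContinuousOn Γ (Icc 0 T)) : Continuous (II T σ c κ Γ) :=
  continuous_iff_continuousAt.mpr fun s => (II_hasDerivAt σ c κ hT hΓ s).continuousAt

lemma EE_hasDerivAt (σ c κ : ℝ) {T : ℝ} {Γ : ℝ → ℝ} (hT : 0 ≤ T)
    (hΓ : ContinuousOn Γ (Icc 0 T)) (t : ℝ) :
    HasDerivAt (EE T σ c κ Γ) ((κ - q T σ c Γ t) * EE T σ c κ Γ t) t := by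
  have h0 : HasDerivAt (fun t => (A T σ c Γ T - A T σ c Γ t) - κ * (T - t))
      (κ - q T σ c Γ t) t := by
    have h : HasDerivAt (fun t => (A T σ c Γ T - A T σ c Γ t) - κ * (T - t))
        (-q T σ c Γ t - κ * -1) t := ((A_hasDerivAt σ c hT hΓ t).const_sub (A T σ c Γ T)).sub (((hasDerivAt_id t).const_sub T).const_mul κ)
    convert h using 1
    ring
  unfold EE
  simpa [mul_comm] using h0.exp

lemma EE_continuous (σ c κ : ℝ) {T : ℝ} {Γ : ℝ → ℝ} (hT : 0 ≤ T)
    (hΓ : ContinuousOn Γ (Icc 0 T)) : Continuous (EE T σ c κ Γ) :=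
  continuous_iff_continuousAt.mpr fun s => (EE_hasDerivAt σ c κ hT hΓ s).continuousAt

lemma uu_continuous (σ c ρ γ : ℝ) {T : ℝ} {Γ : ℝ → ℝ} (hT : 0 ≤ T)
    (hΓ : ContinuousOn Γ (Icc 0 T)) : Continuous (uu T σ c ρ γ Γ) :=
  (cl_continuous hT hΓ).prodMk ((II_continuous σ c ρ hT hΓ).prodMk
    ((II_continuous σ c γ hT hΓ).prodMk ((EE_continuous σ c ρ hT hΓ).prodMk
      (EE_continuous σ c γ hT hΓ))))

lemma uu_apply_T (σ c ρ γ : ℝ) {T : ℝ} {Γ : ℝ → ℝ} (hT : 0 ≤ T) (hΓT : Γ T = 1) :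
    uu T σ c ρ γ Γ T = (1, 0, 0, 1, 1) := by
  have h1 : cl T Γ T = 1 := by rw [cl_eq hT ⟨hT, le_rfl⟩, hΓT]
  have h2 : ∀ κ : ℝ, II T σ c κ Γ T = 0 := by
    intro κ; simp [II, intervalIntegral.integral_same]
  have h3 : ∀ κ : ℝ, EE T σ c κ Γ T = 1 := by
    intro κ; simp [EE]
  simp [uu, h1, h2, h3]

lemma cl_hasDerivWithinAt {T : ℝ} {Γ Γ' : ℝ → ℝ} (hT : 0 < T)
    (hderiv : ∀ t ∈ Icc (0:ℝ) T, HasDerivWithinAt Γ (Γ' t) (Icc (0:ℝ) T) t)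
    {t : ℝ} (ht : t ∈ Ioc (0:ℝ) T) :
    HasDerivWithinAt (cl T Γ) (Γ' t) (Iic t) t := by
  have hmem : t ∈ Icc (0:ℝ) T := ⟨ht.1.le, ht.2⟩
  have h1 : HasDerivWithinAt (cl T Γ) (Γ' t) (Icc 0 t) t := by
    refine ((hderiv t hmem).mono (Icc_subset_Icc le_rfl ht.2)).congr ?_ (cl_eq hT.le hmem)
    intro x hx
    exact cl_eq hT.le ⟨hx.1, hx.2.trans ht.2⟩
  have h2 : HasDerivWithinAt (cl T Γ) (Γ' t) (Iio 0) t := by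
    apply HasFDerivWithinAt.of_notMem_closure
    rw [closure_Iio]
    simp only [mem_Iic, not_le]
    exact ht.1
  have hset : Iio (0:ℝ) ∪ Icc 0 t = Iic t := by
    ext x
    simp only [mem_union, mem_Iio, mem_Icc, mem_Iic]
    constructor
    · rintro (h | ⟨h1, h2⟩)
      · linarith [ht.1]
      · exact h2
    · intro h
      rcases lt_or_ge x 0 with h' | h'
      · exact Or.inl h'
      · exact Or.inr ⟨h', h⟩
  have h3 := h2.union h1
  rwa [hset] at h3

lemma uu_hasDerivWithinAt (T σ c ρ γ l : ℝ) (hT : 0 < T) {Γ Γ' : ℝ → ℝ} {α : ℝ → ℝ}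
    (hα : α = fun t : ℝ => l * Real.exp (-ρ * t) + (1 - l) * Real.exp (-γ * t))
    (hΓ : ContinuousOn Γ (Icc 0 T))
    (hderiv : ∀ t ∈ Icc (0:ℝ) T, HasDerivWithinAt Γ (Γ' t) (Icc (0:ℝ) T) t)
    (heq : ∀ t ∈ Icc (0:ℝ) T,
      Γ' t + σ ^ 2 * Γ t - c * (Γ t) ^ 2
        + (∫ s in t..T, Real.exp (∫ r in t..s, (σ ^ 2 - 2 * c * Γ r))
            * deriv α (s - t) * (c * (Γ s) ^ 2))
        + Real.exp (∫ r in t..T, (σ ^ 2 - 2 * c * Γ r)) * deriv α (T - t) = 0)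
    {t : ℝ} (ht : t ∈ Ioc (0:ℝ) T) :
    HasDerivWithinAt (uu T σ c ρ γ Γ) (vv σ c ρ γ l (uu T σ c ρ γ Γ t)) (Iic t) t := by
  have hmem : t ∈ Icc (0:ℝ) T := ⟨ht.1.le, ht.2⟩
  have h1 := cl_hasDerivWithinAt hT hderiv ht
  have h2 := ((II_hasDerivAt σ c ρ hT.le hΓ t).hasDerivWithinAt (s := Iic t))
  have h3 := ((II_hasDerivAt σ c γ hT.le hΓ t).hasDerivWithinAt (s := Iic t))
  have h4 := ((EE_hasDerivAt σ c ρ hT.le hΓ t).hasDerivWithinAt (s := Iic t))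
  have h5 := ((EE_hasDerivAt σ c γ hT.le hΓ t).hasDerivWithinAt (s := Iic t))
  have H := h1.prodMk (h2.prodMk (h3.prodMk (h4.prodMk h5)))
  convert H using 1
  · rfl
  have hΓ'  := gamma_deriv_eq T σ c ρ γ l hT Γ Γ' α hα hΓ heq hmem
  simp only [vv, uu, q, Prod.mk.injEq]
  refine ⟨?_, ?_, ?_, ?_, ?_⟩
  · rw [hΓ']
  · ring
  · ring
  · ring
  · ring

end VDIEproof

open VDIEproof
/-- uniqueness of the continuously differentiable solution of the VDIE. -/
theorem vdie_uniqueness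
    (T σ R ρ γ l : ℝ) (hT : 0 < T) (hR0 : 0 < R) (hR1 : R ≤ 1)
    (hρ : 0 < ρ) (hργ : ρ < γ) (hl0 : 0 < l) (hl1 : l < 1)
    (α : ℝ → ℝ)
    (hα : α = fun t : ℝ => l * Real.exp (-ρ * t) + (1 - l) * Real.exp (-γ * t))
    (Γ₁ Γ₁' Γ₂ Γ₂' : ℝ → ℝ)
    (h₁ : IsVDIESolution T σ R α Γ₁ Γ₁')
    (h₂ : IsVDIESolution T σ R α Γ₂ Γ₂') :
    Set.EqOn Γ₁ Γ₂ (Set.Icc (0 : ℝ) T) := by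
  obtain ⟨hc1, hd1, he1, hT1⟩ := h₁
  obtain ⟨hc2, hd2, he2, hT2⟩ := h₂
  set c : ℝ := (1 - R) / R with hcdef
  have hc : 0 ≤ c := div_nonneg (by linarith) hR0.le
  have hΓ₁ : ContinuousOn Γ₁ (Icc 0 T) := fun t ht => (hd1 t ht).continuousWithinAt
  have hΓ₂ : ContinuousOn Γ₂ (Icc 0 T) := fun t ht => (hd2 t ht).continuousWithinAt
  obtain ⟨M₁, hM₁⟩ := isCompact_Icc.exists_bound_of_continuousOn
    ((uu_continuous σ c ρ γ hT.le hΓ₁).continuousOn (s := Icc (0:ℝ) T))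
  obtain ⟨M₂, hM₂⟩ := isCompact_Icc.exists_bound_of_continuousOn
    ((uu_continuous σ c ρ γ hT.le hΓ₂).continuousOn (s := Icc (0:ℝ) T))
  set M := max M₁ M₂ with hMdef
  have hEqOn : Set.EqOn (uu T σ c ρ γ Γ₁) (uu T σ c ρ γ Γ₂) (Icc 0 T) := by
    apply ODE_solution_unique_of_mem_Icc_left
      (v := fun _ => vv σ c ρ γ l) (s := fun _ => Metric.closedBall 0 M)
      (K := (3 * σ ^ 2 + 3 * ρ + 3 * γ + 6 * c * M).toNNReal)
      (fun _ _ => vv_lipschitz σ c ρ γ l M hc hρ hργ hl0 hl1)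
      ((uu_continuous σ c ρ γ hT.le hΓ₁).continuousOn)
      (fun t ht => uu_hasDerivWithinAt T σ c ρ γ l hT hα hΓ₁ hd1 he1 ht)
      (fun t ht => mem_closedBall_zero_iff.mpr
        ((hM₁ t ⟨ht.1.le, ht.2⟩).trans (le_max_left _ _)))
      ((uu_continuous σ c ρ γ hT.le hΓ₂).continuousOn)
      (fun t ht => uu_hasDerivWithinAt T σ c ρ γ l hT hα hΓ₂ hd2 he2 ht)
      (fun t ht => mem_closedBall_zero_iff.mpr
        ((hM₂ t ⟨ht.1.le, ht.2⟩).trans (le_max_right _ _)))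
      (by rw [uu_apply_T σ c ρ γ hT.le hT1, uu_apply_T σ c ρ γ hT.le hT2])
  intro t ht
  have h := hEqOn ht
  have h1 := congrArg Prod.fst h
  simp only [uu] at h1
  rwa [cl_eq hT.le ht, cl_eq hT.le ht] at h1
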